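/- The characters χ(V+w) distinguish affine subspaces: if V, V' ⊆ ℝ^m are linear subspaces, w ∈ V^⊥, w' ∈ V'^⊥, and the characters χ(V+w) and χ(V'+w') agree on every element of C_R(ℝ^m), then V = V' and w = w'. -/

import Mathlib

open Filter Topology
open scoped BoundedContinuousFunction InnerProductSpace

noncomputable section

/-- `ℝ^m` with its standard inner product. -/
abbrev E (m : ℕ) : Type := EuclideanSpace ℝ (Fin m)

/-- The resolvent functions `h^λ_x : y ↦ 1/(iλ - ⟨x,y⟩)`, as elements of `C_b(ℝ^m, ℂ)`. -/
def resolventFns (m : ℕ) : Set (E m →ᵇ ℂ) :=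
  {f | ∃ (x : E m) (l : ℝ), l ≠ 0 ∧
    ∀ y : E m, f y = (Complex.I * (l : ℂ) - ((⟪x, y⟫_ℝ : ℝ) : ℂ))⁻¹}

/-- The commutative resolvent algebra: the smallest closed star-subalgebra of
`C_b(ℝ^m, ℂ)` containing all the functions `h^λ_x`. -/
def CR (m : ℕ) : StarSubalgebra ℂ (E m →ᵇ ℂ) :=
  (StarAlgebra.adjoin ℂ (resolventFns m)).topologicalClosure

/-- The distance of `f` to the set `S` in the sup norm, `inf {‖f - ξ‖_∞ : ξ ∈ S}`. -/
def qdist {m : ℕ} (S : Set (E m →ᵇ ℂ)) (f : E m →ᵇ ℂ) : ℝ :=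
  sInf ((fun ξ => ‖f - ξ‖) '' S)

/-- The recursive filtration `C_r(ℝ^m)`: `C_0` consists of the continuous functions vanishing
at infinity; `C_{r+1}` consists of those bounded continuous `f` admitting a countable family
of levees `g_i ∘ P_i`, with pairwise distinct orthogonal projections `P_i` onto
`(m - (r+1))`-dimensional subspaces and `g_i ∈ C₀(ran P_i)`, summing unconditionally to `f`
in the seminorm `‖·‖_r = qdist (Cfilt m r)`. -/
def Cfilt (m : ℕ) : ℕ → Set (E m →ᵇ ℂ)
  | 0 => {f | Tendsto f (cocompact (E m)) (𝓝 0)}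
  | (r + 1) =>
    {f | ∃ (I : Set ℕ) (V : I → Submodule ℝ (E m)) (g : ∀ i : I, V i → ℂ)
        (F : I → (E m →ᵇ ℂ)),
      Function.Injective V ∧
      (∀ i, Module.finrank ℝ (V i) = m - (r + 1)) ∧
      (∀ i, Continuous (g i)) ∧
      (∀ i, Tendsto (g i) (cocompact _) (𝓝 0)) ∧
      (∀ (i : I) (y : E m), F i y = g i (Submodule.orthogonalProjectionOnto (V i) y)) ∧
      Tendsto (fun s : Finset I => qdist (Cfilt m r) (f - ∑ i ∈ s, F i)) atTop (𝓝 0)}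


/-- The defining property of the character `χ(V+w)` of `C_R(ℝ^m)`: on any levee `g ∘ P_U`
(with `U ⊆ ℝ^m` a subspace and `g ∈ C₀(U)`) it takes the value `g(P_U w)` if `V ⊆ U^⊥`,
and `0` otherwise. -/
def IsResolventChar (m : ℕ) (V : Submodule ℝ (E m)) (w : E m)
    (φ : ↥(CR m) → ℂ) : Prop :=
  ∀ (U : Submodule ℝ (E m)) (g : U → ℂ), Continuous g →
    Tendsto g (cocompact _) (𝓝 0) →
    ∀ f : ↥(CR m), (∀ y : E m, (f : E m →ᵇ ℂ) y = g (Submodule.orthogonalProjectionOnto U y)) →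
      (V ≤ Uᗮ → φ f = g (Submodule.orthogonalProjectionOnto U w)) ∧ (¬ V ≤ Uᗮ → φ f = 0)

/-! ### Auxiliary lemmas for the proof -/

lemma aux_ne (c : ℝ) : (Complex.I - (c : ℂ)) ≠ 0 := by
  intro h
  have := congrArg Complex.im h
  simp at this

lemma aux_one_le (c : ℝ) : 1 ≤ ‖Complex.I - (c : ℂ)‖ := by
  have h := Complex.abs_im_le_norm (Complex.I - (c : ℂ))
  simpa using h

lemma aux_abs_le (c : ℝ) : |c| ≤ ‖Complex.I - (c : ℂ)‖ := by
  have h := Complex.abs_re_le_norm (Complex.I - (c : ℂ))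
  simpa using h

/-- The resolvent function `h^1_x` as a bounded continuous function. -/
def hres {m : ℕ} (x : E m) : E m →ᵇ ℂ :=
  BoundedContinuousFunction.ofNormedAddCommGroup
    (fun y => (Complex.I - ((⟪x, y⟫_ℝ : ℝ) : ℂ))⁻¹)
    (by
      apply Continuous.inv₀
      · exact continuous_const.sub (Complex.continuous_ofReal.comp
          (continuous_const.inner continuous_id))
      · intro y; exact aux_ne _)
    1
    (by
      intro y
      rw [norm_inv]
      exact inv_le_one_of_one_le₀ (aux_one_le _))

@[simp] lemma hres_apply {m : ℕ} (x y : E m) :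
    hres x y = (Complex.I - ((⟪x, y⟫_ℝ : ℝ) : ℂ))⁻¹ := rfl

lemma hres_mem {m : ℕ} (x : E m) : hres x ∈ CR m := by
  apply (StarAlgebra.adjoin ℂ (resolventFns m)).le_topologicalClosure
  apply StarAlgebra.subset_adjoin
  exact ⟨x, 1, one_ne_zero, fun y => by simp⟩

lemma inner_proj {m : ℕ} (U : Submodule ℝ (E m)) [Submodule.HasOrthogonalProjection U]
    {x : E m} (hx : x ∈ U) (y : E m) :
    ⟪x, ((Submodule.orthogonalProjectionOnto U y : E m))⟫_ℝ = ⟪x, y⟫_ℝ := by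
  have hmem : y - (Submodule.orthogonalProjectionOnto U y : E m) ∈ Uᗮ :=
    Submodule.sub_starProjection_mem_orthogonal (K := U) y
  have h0 := (Submodule.mem_orthogonal U _).1 hmem x hx
  rw [inner_sub_right] at h0
  linarith

lemma le_orth_iff {m : ℕ} (V : Submodule ℝ (E m)) (x : E m) :
    V ≤ (ℝ ∙ x)ᗮ ↔ x ∈ Vᗮ := by
  constructor
  · intro hle
    rw [Submodule.mem_orthogonal]
    intro v hv
    have := (Submodule.mem_orthogonal _ _).1 (hle hv) x (Submodule.mem_span_singleton_self x)
    rw [real_inner_comm]; exact this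
  · intro hxV v hv
    rw [Submodule.mem_orthogonal]
    intro u hu
    obtain ⟨t, rfl⟩ := Submodule.mem_span_singleton.1 hu
    have h0 := (Submodule.mem_orthogonal _ _).1 hxV v hv
    rw [real_inner_smul_left, real_inner_comm, h0, mul_zero]

/-- The key computation: the value of a resolvent character on `h^1_x`. -/
lemma char_eval {m : ℕ} (V : Submodule ℝ (E m)) (w : E m)
    (φ : ↥(CR m) → ℂ) (hφ : IsResolventChar m V w φ)
    {x : E m} (hx0 : x ≠ 0) :
    (x ∈ Vᗮ → φ ⟨hres x, hres_mem x⟩ = (Complex.I - ((⟪x, w⟫_ℝ : ℝ) : ℂ))⁻¹) ∧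
    (x ∉ Vᗮ → φ ⟨hres x, hres_mem x⟩ = 0) := by
  set U : Submodule ℝ (E m) := ℝ ∙ x with hU
  set g : U → ℂ := fun u => (Complex.I - ((⟪x, (u : E m)⟫_ℝ : ℝ) : ℂ))⁻¹ with hg
  have gcont : Continuous g := by
    apply Continuous.inv₀
    · exact continuous_const.sub (Complex.continuous_ofReal.comp
        (continuous_const.inner continuous_subtype_val))
    · intro u; exact aux_ne _
  have hbound : ∀ u : U, ‖x‖ * ‖u‖ ≤ ‖Complex.I - ((⟪x, (u : E m)⟫_ℝ : ℝ) : ℂ)‖ := by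
    rintro ⟨u, hu⟩
    obtain ⟨t, rfl⟩ := Submodule.mem_span_singleton.1 hu
    refine le_trans (le_of_eq ?_) (aux_abs_le _)
    rw [real_inner_smul_right, real_inner_self_eq_norm_mul_norm, abs_mul]
    have : ‖(⟨t • x, hu⟩ : U)‖ = ‖t • x‖ := rfl
    rw [this, norm_smul]
    simp [abs_norm]
    ring
  have gvanish : Tendsto g (cocompact U) (𝓝 0) := by
    have h1 : Tendsto (fun u : U => ‖x‖ * ‖u‖) (cocompact U) atTop :=
      (tendsto_norm_cocompact_atTop).const_mul_atTop (norm_pos_iff.2 hx0)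
    have h2 : Tendsto (fun u : U => Complex.I - ((⟪x, (u : E m)⟫_ℝ : ℝ) : ℂ))
        (cocompact U) (Bornology.cobounded ℂ) := by
      rw [← tendsto_norm_atTop_iff_cobounded]
      exact tendsto_atTop_mono hbound h1
    exact tendsto_inv₀_cobounded.comp h2
  have hf : ∀ y : E m, ((⟨hres x, hres_mem x⟩ : ↥(CR m)) : E m →ᵇ ℂ) y
      = g (Submodule.orthogonalProjectionOnto U y) := by
    intro y
    show (Complex.I - ((⟪x, y⟫_ℝ : ℝ) : ℂ))⁻¹
      = (Complex.I - ((⟪x, ((Submodule.orthogonalProjectionOnto U y : E m))⟫_ℝ : ℝ) : ℂ))⁻¹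
    rw [inner_proj U (Submodule.mem_span_singleton_self x) y]
  have key := hφ U g gcont gvanish ⟨hres x, hres_mem x⟩ hf
  constructor
  · intro hxV
    rw [key.1 ((le_orth_iff V x).2 hxV)]
    show (Complex.I - ((⟪x, ((Submodule.orthogonalProjectionOnto U w : E m))⟫_ℝ : ℝ) : ℂ))⁻¹ = _
    rw [inner_proj U (Submodule.mem_span_singleton_self x) w]
  · intro hxV
    exact key.2 (fun hle => hxV ((le_orth_iff V x).1 hle))


/-- the characters `χ(V+w)` distinguish affine subspaces: if the characters
`χ(V+w)` and `χ(V'+w')` agree on every element of `C_R(ℝ^m)`, then `V = V'` and `w = w'`. -/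
theorem resolventChar_injective (m : ℕ)
    (V V' : Submodule ℝ (E m)) (w w' : E m) (hw : w ∈ Vᗮ) (hw' : w' ∈ V'ᗮ)
    (φ φ' : WeakDual.characterSpace ℂ (CR m))
    (hφ : IsResolventChar m V w (fun a => (φ : WeakDual ℂ (CR m)) a))
    (hφ' : IsResolventChar m V' w' (fun a => (φ' : WeakDual ℂ (CR m)) a))
    (h : ∀ f : ↥(CR m), (φ : WeakDual ℂ (CR m)) f = (φ' : WeakDual ℂ (CR m)) f) :
    V = V' ∧ w = w' := by
  -- Step 1: Vᗮ = V'ᗮ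
  have horth : Vᗮ = V'ᗮ := by
    ext x
    by_cases hx0 : x = 0
    · subst hx0; simp
    · have e1 := char_eval V w _ hφ hx0
      have e2 := char_eval V' w' _ hφ' hx0
      have hh := h ⟨hres x, hres_mem x⟩
      constructor
      · intro hxV
        by_contra hxV'
        rw [e1.1 hxV, e2.2 hxV'] at hh
        exact inv_ne_zero (aux_ne _) hh
      · intro hxV'
        by_contra hxV
        rw [e1.2 hxV, e2.1 hxV'] at hh
        exact inv_ne_zero (aux_ne _) hh.symm
  have hVV' : V = V' := by
    have := congrArg (fun K : Submodule ℝ (E m) => Kᗮ) horth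
    simpa [Submodule.orthogonal_orthogonal] using this
  refine ⟨hVV', ?_⟩
  -- Step 2: w = w'
  by_contra hne
  set x : E m := w - w' with hx
  have hx0 : x ≠ 0 := sub_ne_zero.2 hne
  have hxV : x ∈ Vᗮ := Submodule.sub_mem _ hw (horth ▸ hw')
  have hxV' : x ∈ V'ᗮ := horth ▸ hxV
  have e1 := (char_eval V w _ hφ hx0).1 hxV
  have e2 := (char_eval V' w' _ hφ' hx0).1 hxV'
  have hh := h ⟨hres x, hres_mem x⟩
  rw [e1, e2] at hh
  have h3 : Complex.I - ((⟪x, w⟫_ℝ : ℝ) : ℂ) = Complex.I - ((⟪x, w'⟫_ℝ : ℝ) : ℂ) :=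
    inv_injective hh
  have h4 : ⟪x, w⟫_ℝ = ⟪x, w'⟫_ℝ := by
    have h4c : ((⟪x, w⟫_ℝ : ℝ) : ℂ) = ((⟪x, w'⟫_ℝ : ℝ) : ℂ) := by linear_combination -h3
    exact_mod_cast h4c
  have h5 : ⟪x, x⟫_ℝ = 0 := by
    rw [hx, inner_sub_right, h4, sub_self]
  exact hx0 (inner_self_eq_zero.1 h5)
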